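/- The map Ψ₃ : ℝ → Γ₃ defined by Ψ₃(τ) := q((0, 0), τ) is a homeomorphism from ℝ onto Γ₃ (with its topology as a subspace of Q_θ), and Γ₃ is a closed subset of Q_θ. -/

import Mathlib

open Filter Topology

/-- The equivalence relation `∼` on `ℂ² × ℝ`: `((z₁,z₂),τ) ∼ ((w₁,w₂),σ)` iff
`|z₁| = |w₁|`, `|z₂| = |w₂|`, and moreover `τ - σ ∈ ℤ` when `z₁ ≠ 0 = z₂`,
`τ - σ ∈ θℤ` when `z₁ = 0 ≠ z₂`, and `τ = σ` when `z₁ = z₂ = 0`. -/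
def mrel (θ : ℝ) (p q : (ℂ × ℂ) × ℝ) : Prop :=
  ‖p.1.1‖ = ‖q.1.1‖ ∧
  ‖p.1.2‖ = ‖q.1.2‖ ∧
  (p.1.1 ≠ 0 ∧ p.1.2 = 0 → ∃ k : ℤ, p.2 - q.2 = (k : ℝ)) ∧
  (p.1.1 = 0 ∧ p.1.2 ≠ 0 → ∃ k : ℤ, p.2 - q.2 = θ * (k : ℝ)) ∧
  (p.1.1 = 0 ∧ p.1.2 = 0 → p.2 = q.2)

theorem mrel_equivalence (θ : ℝ) : Equivalence (mrel θ) := by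
  constructor
  · exact fun p => ⟨rfl, rfl, fun _ => ⟨0, by simp⟩, fun _ => ⟨0, by simp⟩, fun _ => rfl⟩
  · rintro p q ⟨h1, h2, h3, h4, h5⟩
    have key : ∀ a b : ℂ, ‖a‖ = ‖b‖ → (a = 0 ↔ b = 0) := by
      intro a b h
      rw [← norm_eq_zero, h, norm_eq_zero]
    have e1 : p.1.1 = 0 ↔ q.1.1 = 0 := key _ _ h1
    have e2 : p.1.2 = 0 ↔ q.1.2 = 0 := key _ _ h2
    refine ⟨h1.symm, h2.symm, ?_, ?_, ?_⟩
    · rintro ⟨hq1, hq2⟩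
      obtain ⟨k, hk⟩ := h3 ⟨fun h => hq1 (e1.mp h), e2.mpr hq2⟩
      exact ⟨-k, by push_cast; linarith⟩
    · rintro ⟨hq1, hq2⟩
      obtain ⟨k, hk⟩ := h4 ⟨e1.mpr hq1, fun h => hq2 (e2.mp h)⟩
      exact ⟨-k, by push_cast; linarith⟩
    · rintro ⟨hq1, hq2⟩
      exact (h5 ⟨e1.mpr hq1, e2.mpr hq2⟩).symm
  · rintro p q r ⟨h1, h2, h3, h4, h5⟩ ⟨g1, g2, g3, g4, g5⟩
    have key : ∀ a b : ℂ, ‖a‖ = ‖b‖ → (a = 0 ↔ b = 0) := by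
      intro a b h
      rw [← norm_eq_zero, h, norm_eq_zero]
    have e1 : p.1.1 = 0 ↔ q.1.1 = 0 := key _ _ h1
    have e2 : p.1.2 = 0 ↔ q.1.2 = 0 := key _ _ h2
    refine ⟨h1.trans g1, h2.trans g2, ?_, ?_, ?_⟩
    · rintro ⟨hp1, hp2⟩
      obtain ⟨k, hk⟩ := h3 ⟨hp1, hp2⟩
      obtain ⟨l, hl⟩ := g3 ⟨fun h => hp1 (e1.mpr h), e2.mp hp2⟩
      exact ⟨k + l, by push_cast; linarith⟩
    · rintro ⟨hp1, hp2⟩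
      obtain ⟨k, hk⟩ := h4 ⟨hp1, hp2⟩
      obtain ⟨l, hl⟩ := g4 ⟨e1.mp hp1, fun h => hp2 (e2.mpr h)⟩
      refine ⟨k + l, by push_cast; linarith [mul_add θ (k : ℝ) (l : ℝ)]⟩
    · rintro ⟨hp1, hp2⟩
      exact (h5 ⟨hp1, hp2⟩).trans (g5 ⟨e1.mp hp1, e2.mp hp2⟩)

/-- The setoid on `ℂ² × ℝ` given by the relation `∼`. -/
def mSetoid (θ : ℝ) : Setoid ((ℂ × ℂ) × ℝ) := ⟨mrel θ, mrel_equivalence θ⟩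

/-- The quotient space `Q_θ = (ℂ² × ℝ)/∼`, with the quotient topology. -/
abbrev Qspace (θ : ℝ) : Type := Quotient (mSetoid θ)

/-- The quotient map `q : ℂ² × ℝ → Q_θ`. -/
def qmap (θ : ℝ) : (ℂ × ℂ) × ℝ → Qspace θ := Quotient.mk (mSetoid θ)


/-- `Γ₁ = q({((z₁,z₂),τ) : z₁ ≠ 0 and z₂ ≠ 0})`. -/
def Gamma1 (θ : ℝ) : Set (Qspace θ) := qmap θ '' {p | p.1.1 ≠ 0 ∧ p.1.2 ≠ 0}

/-- `Γ₂' = q({((z₁,z₂),τ) : z₁ ≠ 0 = z₂})`. -/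
def Gamma2' (θ : ℝ) : Set (Qspace θ) := qmap θ '' {p | p.1.1 ≠ 0 ∧ p.1.2 = 0}

/-- `Γ₂'' = q({((z₁,z₂),τ) : z₁ = 0 ≠ z₂})`. -/
def Gamma2'' (θ : ℝ) : Set (Qspace θ) := qmap θ '' {p | p.1.1 = 0 ∧ p.1.2 ≠ 0}

/-- `Γ₂ = Γ₂' ∪ Γ₂''`. -/
def Gamma2 (θ : ℝ) : Set (Qspace θ) := Gamma2' θ ∪ Gamma2'' θ

/-- `Γ₃ = q({((0,0),τ) : τ ∈ ℝ})`. -/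
def Gamma3 (θ : ℝ) : Set (Qspace θ) := qmap θ '' {p | p.1.1 = 0 ∧ p.1.2 = 0}

section GammaAux

open Metric Set

lemma zero_iff_of_abs_eq {a b : ℂ} (h : ‖a‖ = ‖b‖) : a = 0 ↔ b = 0 := by
  rw [← norm_eq_zero, h, norm_eq_zero]

/-- The saturated open set used to prove openness of `Ψ₃`. -/
def Sset (θ : ℝ) (g : ℝ → ℝ) : Set ((ℂ × ℂ) × ℝ) :=
  {p | p.1.1 ≠ 0 ∧ p.1.2 ≠ 0} ∪
  {p | ‖p.1.1‖ < g p.2 ∧ ‖p.1.2‖ < g p.2} ∪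
  {p | p.1.1 ≠ 0 ∧ ∃ k : ℤ, ‖p.1.1‖ < g (p.2 + (k : ℝ))} ∪
  {p | p.1.2 ≠ 0 ∧ ∃ k : ℤ, ‖p.1.2‖ < g (p.2 + θ * (k : ℝ))}

lemma Sset_sat (θ : ℝ) (g : ℝ → ℝ) {p q : (ℂ × ℂ) × ℝ} (hr : mrel θ p q)
    (hp : p ∈ Sset θ g) : q ∈ Sset θ g := by
  obtain ⟨h1, h2, h3, h4, h5⟩ := hr
  have e1 : p.1.1 = 0 ↔ q.1.1 = 0 := zero_iff_of_abs_eq h1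
  have e2 : p.1.2 = 0 ↔ q.1.2 = 0 := zero_iff_of_abs_eq h2
  by_cases hz1 : p.1.1 = 0 <;> by_cases hz2 : p.1.2 = 0
  · -- both zero
    have ht : p.2 = q.2 := h5 ⟨hz1, hz2⟩
    rcases hp with (((⟨ha, _⟩ | ⟨hb1, hb2⟩) | ⟨hc, _⟩) | ⟨hd, _⟩)
    · exact absurd hz1 ha
    · exact Or.inl (Or.inl (Or.inr ⟨by rw [← h1, ← ht]; exact hb1, by rw [← h2, ← ht]; exact hb2⟩))
    · exact absurd hz1 hc
    · exact absurd hz2 hd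
  · -- z₁ = 0 ≠ z₂
    obtain ⟨k, hk⟩ := h4 ⟨hz1, hz2⟩
    have hq2 : q.1.2 ≠ 0 := fun h => hz2 (e2.mpr h)
    rcases hp with (((⟨ha, _⟩ | ⟨_, hb2⟩) | ⟨hc, _⟩) | ⟨hd, ⟨m, hm⟩⟩)
    · exact absurd hz1 ha
    · refine Or.inr ⟨hq2, k, ?_⟩
      have : q.2 + θ * (k : ℝ) = p.2 := by linarith
      rw [this, ← h2]; exact hb2
    · exact absurd hz1 hc
    · refine Or.inr ⟨hq2, k + m, ?_⟩
      have : q.2 + θ * ((k + m : ℤ) : ℝ) = p.2 + θ * (m : ℝ) := by push_cast; ring_nf; linarith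
      rw [this, ← h2]; exact hm
  · -- z₁ ≠ 0 = z₂
    obtain ⟨k, hk⟩ := h3 ⟨hz1, hz2⟩
    have hq1 : q.1.1 ≠ 0 := fun h => hz1 (e1.mpr h)
    rcases hp with (((⟨_, ha⟩ | ⟨hb1, _⟩) | ⟨_, ⟨m, hm⟩⟩) | ⟨hd, _⟩)
    · exact absurd hz2 ha
    · refine Or.inl (Or.inr ⟨hq1, k, ?_⟩)
      have : q.2 + (k : ℝ) = p.2 := by linarith
      rw [this, ← h1]; exact hb1
    · refine Or.inl (Or.inr ⟨hq1, k + m, ?_⟩)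
      have : q.2 + ((k + m : ℤ) : ℝ) = p.2 + (m : ℝ) := by push_cast; linarith
      rw [this, ← h1]; exact hm
    · exact absurd hz2 hd
  · exact Or.inl (Or.inl (Or.inl ⟨fun h => hz1 (e1.mpr h), fun h => hz2 (e2.mpr h)⟩))

lemma Sset_open (θ : ℝ) {g : ℝ → ℝ} (hg : Continuous g) : IsOpen (Sset θ g) := by
  have ca1 : Continuous fun p : (ℂ × ℂ) × ℝ => ‖p.1.1‖ :=
    continuous_norm.comp (continuous_fst.fst)
  have ca2 : Continuous fun p : (ℂ × ℂ) × ℝ => ‖p.1.2‖ :=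
    continuous_norm.comp (continuous_fst.snd)
  have cn1 : IsOpen {p : (ℂ × ℂ) × ℝ | p.1.1 ≠ 0} :=
    isOpen_ne_fun continuous_fst.fst continuous_const
  have cn2 : IsOpen {p : (ℂ × ℂ) × ℝ | p.1.2 ≠ 0} :=
    isOpen_ne_fun continuous_fst.snd continuous_const
  refine (((cn1.inter cn2).union ?_).union ?_).union ?_
  · exact (isOpen_lt ca1 (hg.comp continuous_snd)).inter
      (isOpen_lt ca2 (hg.comp continuous_snd))
  · have : {p : (ℂ × ℂ) × ℝ | p.1.1 ≠ 0 ∧ ∃ k : ℤ, ‖p.1.1‖ < g (p.2 + (k : ℝ))} =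
        {p : (ℂ × ℂ) × ℝ | p.1.1 ≠ 0} ∩
        ⋃ k : ℤ, {p : (ℂ × ℂ) × ℝ | ‖p.1.1‖ < g (p.2 + (k : ℝ))} := by
      ext p; simp [Set.mem_iUnion]
    rw [this]
    exact cn1.inter (isOpen_iUnion fun k =>
      isOpen_lt ca1 (hg.comp (continuous_snd.add continuous_const)))
  · have : {p : (ℂ × ℂ) × ℝ | p.1.2 ≠ 0 ∧ ∃ k : ℤ, ‖p.1.2‖ < g (p.2 + θ * (k : ℝ))} =
        {p : (ℂ × ℂ) × ℝ | p.1.2 ≠ 0} ∩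
        ⋃ k : ℤ, {p : (ℂ × ℂ) × ℝ | ‖p.1.2‖ < g (p.2 + θ * (k : ℝ))} := by
      ext p; simp [Set.mem_iUnion]
    rw [this]
    exact cn2.inter (isOpen_iUnion fun k =>
      isOpen_lt ca2 (hg.comp (continuous_snd.add continuous_const)))

end GammaAux
/-- The map `Ψ₃ : ℝ → Γ₃`, `Ψ₃(τ) = q((0,0), τ)`, is a homeomorphism onto `Γ₃`, and `Γ₃`
is a closed subset of `Q_θ`. -/
theorem Gamma3_homeo_and_isClosed (θ : ℝ) (hθ : Irrational θ) :
    (∃ Ψ₃ : ℝ ≃ₜ (Gamma3 θ), ∀ τ : ℝ, (Ψ₃ τ : Qspace θ) = qmap θ ((0, 0), τ)) ∧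
    IsClosed (Gamma3 θ) := by
  classical
  have hqm : Topology.IsQuotientMap (qmap θ) := isQuotientMap_quot_mk
  have hmem : ∀ τ : ℝ, qmap θ ((0, 0), τ) ∈ Gamma3 θ := fun τ => ⟨((0,0),τ), ⟨rfl, rfl⟩, rfl⟩
  set f : ℝ → Gamma3 θ := fun τ => ⟨qmap θ ((0,0),τ), hmem τ⟩ with hf
  have hq_eq : ∀ p : (ℂ × ℂ) × ℝ, p.1.1 = 0 → p.1.2 = 0 → qmap θ ((0,0), p.2) = qmap θ p := by
    intro p h1 h2
    apply Quotient.sound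
    refine ⟨by rw [h1], by rw [h2], fun h => absurd rfl h.1, fun h => absurd rfl h.2, fun _ => rfl⟩
  have hinj : Function.Injective f := by
    intro τ σ h
    have h' : mrel θ ((0,0),τ) ((0,0),σ) := Quotient.exact (Subtype.ext_iff.mp h)
    exact h'.2.2.2.2 ⟨rfl, rfl⟩
  have hsurj : Function.Surjective f := by
    rintro ⟨x, p, ⟨h1, h2⟩, rfl⟩
    exact ⟨p.2, Subtype.ext (hq_eq p h1 h2)⟩
  have hcf : Continuous f :=
    (hqm.continuous.comp (continuous_const.prodMk continuous_id)).subtype_mk _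
  have hclosedpre : IsClosed {p : (ℂ × ℂ) × ℝ | p.1.1 = 0 ∧ p.1.2 = 0} := by
    have heq : {p : (ℂ × ℂ) × ℝ | p.1.1 = 0 ∧ p.1.2 = 0}
        = (fun p : (ℂ × ℂ) × ℝ => p.1.1) ⁻¹' {0} ∩ (fun p : (ℂ × ℂ) × ℝ => p.1.2) ⁻¹' {0} := rfl
    rw [heq]
    exact (isClosed_singleton.preimage continuous_fst.fst).inter
      (isClosed_singleton.preimage continuous_fst.snd)
  have hpreG : qmap θ ⁻¹' Gamma3 θ = {p : (ℂ × ℂ) × ℝ | p.1.1 = 0 ∧ p.1.2 = 0} := by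
    ext p
    constructor
    · rintro ⟨p', ⟨h1, h2⟩, h⟩
      have hr : mrel θ p' p := Quotient.exact h
      exact ⟨(zero_iff_of_abs_eq hr.1).mp h1, (zero_iff_of_abs_eq hr.2.1).mp h2⟩
    · intro hp; exact ⟨p, hp, rfl⟩
  have hG3closed : IsClosed (Gamma3 θ) := hqm.isClosed_preimage.mp (hpreG ▸ hclosedpre)
  have hopen : IsOpenMap f := by
    intro U hU
    by_cases hne : Uᶜ.Nonempty
    · set g : ℝ → ℝ := fun τ => Metric.infDist τ Uᶜ with hg
      have hgc : Continuous g := Metric.continuous_infDist_pt _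
      have hgpos : ∀ τ, 0 < g τ ↔ τ ∈ U := by
        intro τ
        rw [← hU.isClosed_compl.notMem_iff_infDist_pos hne]
        simp
      have hpre : qmap θ ⁻¹' (qmap θ '' Sset θ g) = Sset θ g := by
        ext p
        constructor
        · rintro ⟨p', hp', h⟩
          exact Sset_sat θ g (Quotient.exact h) hp'
        · intro hp; exact ⟨p, hp, rfl⟩
      have hV : IsOpen (qmap θ '' Sset θ g) :=
        hqm.isOpen_preimage.mp (by rw [hpre]; exact Sset_open θ hgc)
      have himg : f '' U = Subtype.val ⁻¹' (qmap θ '' Sset θ g) := by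
        ext x
        constructor
        · rintro ⟨τ, hτ, rfl⟩
          refine ⟨((0,0),τ), Or.inl (Or.inl (Or.inr ⟨?_, ?_⟩)), rfl⟩ <;>
          · show ‖(0:ℂ)‖ < g τ
            simpa using (hgpos τ).mpr hτ
        · rintro ⟨p, hp, hx⟩
          obtain ⟨p0, ⟨h01, h02⟩, h0x⟩ := x.2
          have hr : mrel θ p0 p := Quotient.exact (h0x.trans hx.symm)
          have hp1 : p.1.1 = 0 := (zero_iff_of_abs_eq hr.1).mp h01
          have hp2 : p.1.2 = 0 := (zero_iff_of_abs_eq hr.2.1).mp h02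
          have hpu : p.2 ∈ U := by
            rcases hp with (((⟨ha, _⟩ | ⟨hb, _⟩) | ⟨hc, _⟩) | ⟨hd, _⟩)
            · exact absurd hp1 ha
            · exact (hgpos p.2).mp ((norm_nonneg _).trans_lt hb)
            · exact absurd hp1 hc
            · exact absurd hp2 hd
          refine ⟨p.2, hpu, ?_⟩
          apply Subtype.ext
          show qmap θ ((0,0), p.2) = (x : Qspace θ)
          rw [← hx]
          exact hq_eq p hp1 hp2
      rw [himg]
      exact hV.preimage continuous_subtype_val
    · have hUuniv : U = Set.univ := by
        rw [Set.not_nonempty_iff_eq_empty] at hne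
        exact Set.compl_empty_iff.mp hne
      subst hUuniv
      rw [Set.image_univ, Set.range_eq_univ.mpr hsurj]
      exact isOpen_univ
  exact ⟨⟨(Equiv.ofBijective f ⟨hinj, hsurj⟩).toHomeomorphOfContinuousOpen hcf hopen,
    fun τ => rfl⟩, hG3closed⟩
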